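/- For ω ∈ F_n let N(ω) be the number of a ∈ {1, …, n−1} such that b̃_{a-1} = 1 and b̃_a = 0. Then for every ε > 0, the conditional probability μ( (5/18 − ε)·n < N < (5/18 + ε)·n ∣ F_n ) tends to 1 as n → ∞. -/

import Mathlib

open MeasureTheory ProbabilityTheory Filter

/-- `μ` is the infinite product over `ℕ` of the uniform probability measure on
`{-1,0,1} ⊆ ℤ`, characterized by its values on cylinder sets.  (Taking `n = 0`
shows `μ` is a probability measure.) -/
def IsCDGProductMeasure (μ : Measure (ℕ → ℤ)) : Prop :=
  ∀ (n : ℕ) (c : ℕ → ℤ),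
    μ {ω : ℕ → ℤ | ∀ i < n, ω i = c i} =
      ∏ i ∈ Finset.range n,
        (if c i = -1 ∨ c i = 0 ∨ c i = 1 then (1 / 3 : ENNReal) else 0)

/-- `S n b = ∑_{i=0}^{n-1} 2^(n-1-i) b i`. -/
def cdgS (n : ℕ) (b : ℕ → ℤ) : ℤ := ∑ i ∈ Finset.range n, 2 ^ (n - 1 - i) * b i

/-- The standard form `b̃ a` of the sequence `b` for length `n`: the binary digit of
`S = ∑_{i<n} 2^(n-1-i) b i` in position `n-1-a`, so that (in the "first 1" case, where
`1 ≤ S ≤ 2^n − 1`) one has `S = ∑_{a<n} 2^(n-1-a) b̃ a` with each `b̃ a ∈ {0,1}`. -/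
def btilde (n : ℕ) (b : ℕ → ℤ) (a : ℕ) : ℕ := (cdgS n b).toNat / 2 ^ (n - 1 - a) % 2

/-- The "first 1" event `F_n` for length `n`: there is `j < n` with `b j = 1` and
`b k = 0` for all `k < j`. -/
def firstOne (n : ℕ) : Set (ℕ → ℤ) :=
  {b : ℕ → ℤ | ∃ j < n, b j = 1 ∧ ∀ k < j, b k = 0}

namespace CDG9
def carryT : List ℤ → Bool
  | [] => false
  | x :: l => if x = 0 then carryT l else decide (x = -1)
def topD : List ℤ → Bool
  | [] => true
  | x :: l => if carryT l then decide (x = 0) else decide (x ≠ 0)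
def patZ : List ℤ → ℤ
  | [] => 0
  | x :: l => patZ l + (if topD l = false ∧ topD (x :: l) = true then (1:ℤ) else 0)
def strs : ℕ → List (List ℤ)
  | 0 => [[]]
  | m+1 => (strs m).flatMap (fun l => [(-1 : ℤ) :: l, (0:ℤ) :: l, (1:ℤ) :: l])
def lsum (m : ℕ) (f : List ℤ → ℤ) : ℤ := ((strs m).map f).sum
def ind (t d : Bool) (l : List ℤ) : ℤ := if carryT l = t ∧ topD l = d then 1 else 0

lemma carryT_cons (x : ℤ) (l : List ℤ) :
    carryT (x :: l) = if x = 0 then carryT l else decide (x = -1) := rfl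
lemma topD_cons (x : ℤ) (l : List ℤ) :
    topD (x :: l) = if carryT l then decide (x = 0) else decide (x ≠ 0) := rfl
lemma patZ_cons (x : ℤ) (l : List ℤ) :
    patZ (x :: l) = patZ l + (if topD l = false ∧ topD (x :: l) = true then (1:ℤ) else 0) := rfl

lemma lsum_succ (m : ℕ) (f : List ℤ → ℤ) :
    lsum (m+1) f = lsum m (fun l => f ((-1)::l) + f (0::l) + f (1::l)) := by
  show ((((strs m).flatMap _)).map f).sum = _
  unfold lsum
  induction strs m with
  | nil => simp
  | cons h t ih => simp_all [List.flatMap_cons]; ring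
lemma lsum_congr {m : ℕ} {f g : List ℤ → ℤ} (h : ∀ l, f l = g l) : lsum m f = lsum m g := by
  unfold lsum
  induction strs m with
  | nil => simp
  | cons a t ih => simp [h a, ih]
lemma lsum_add (m : ℕ) (f g : List ℤ → ℤ) :
    lsum m (fun l => f l + g l) = lsum m f + lsum m g := by
  unfold lsum
  induction strs m with
  | nil => simp
  | cons a t ih => simp [ih]; ring

lemma recAff (m : ℕ) : lsum (m+1) (ind false false) = lsum m (fun _ => (1:ℤ)) := by
  rw [lsum_succ]
  have h : ∀ l, (ind false false ((-1)::l) + ind false false ((0:ℤ)::l) + ind false false ((1:ℤ)::l)) = (fun _ => (1:ℤ)) l := by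
    intro l
    cases hc : carryT l <;> cases hd : topD l <;>
      simp only [ind, topD_cons, carryT_cons, hc, hd] <;> norm_num
  rw [lsum_congr h]

lemma recAtt (m : ℕ) : lsum (m+1) (ind true true) = lsum m (fun _ => (1:ℤ)) := by
  rw [lsum_succ]
  have h : ∀ l, (ind true true ((-1)::l) + ind true true ((0:ℤ)::l) + ind true true ((1:ℤ)::l)) = (fun _ => (1:ℤ)) l := by
    intro l
    cases hc : carryT l <;> cases hd : topD l <;>
      simp only [ind, topD_cons, carryT_cons, hc, hd] <;> norm_num
  rw [lsum_congr h]

lemma recAft (m : ℕ) : lsum (m+1) (ind false true) =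
    lsum m (ind false false) + lsum m (ind false true) := by
  rw [lsum_succ]
  have h : ∀ l, (ind false true ((-1)::l) + ind false true ((0:ℤ)::l) + ind false true ((1:ℤ)::l)) = (ind false false l) + (ind false true l) := by
    intro l
    cases hc : carryT l <;> cases hd : topD l <;>
      simp only [ind, topD_cons, carryT_cons, hc, hd] <;> norm_num
  rw [lsum_congr h, lsum_add]

lemma recAtf (m : ℕ) : lsum (m+1) (ind true false) =
    lsum m (ind true false) + lsum m (ind true true) := by
  rw [lsum_succ]
  have h : ∀ l, (ind true false ((-1)::l) + ind true false ((0:ℤ)::l) + ind true false ((1:ℤ)::l)) = (ind true false l) + (ind true true l) := by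
    intro l
    cases hc : carryT l <;> cases hd : topD l <;>
      simp only [ind, topD_cons, carryT_cons, hc, hd] <;> norm_num
  rw [lsum_congr h, lsum_add]

lemma recBff (m : ℕ) : lsum (m+1) (fun l => patZ l * ind false false l) =
    lsum m (fun l => patZ l * ind false false l) + lsum m (fun l => patZ l * ind false true l) + lsum m (fun l => patZ l * ind true false l) + lsum m (fun l => patZ l * ind true true l) := by
  rw [lsum_succ]
  have h : ∀ l, (patZ ((-1)::l) * ind false false ((-1)::l) + patZ ((0:ℤ)::l) * ind false false ((0:ℤ)::l) + patZ ((1:ℤ)::l) * ind false false ((1:ℤ)::l)) = (patZ l * ind false false l) + (patZ l * ind false true l) + (patZ l * ind true false l) + (patZ l * ind true true l) := by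
    intro l
    cases hc : carryT l <;> cases hd : topD l <;>
      simp only [ind, patZ_cons, topD_cons, carryT_cons, hc, hd] <;>
      norm_num <;> ring
  rw [lsum_congr h, lsum_add, lsum_add, lsum_add]
  try ring

lemma recBft (m : ℕ) : lsum (m+1) (fun l => patZ l * ind false true l) =
    lsum m (fun l => patZ l * ind false false l) + lsum m (ind false false) + lsum m (fun l => patZ l * ind false true l) := by
  rw [lsum_succ]
  have h : ∀ l, (patZ ((-1)::l) * ind false true ((-1)::l) + patZ ((0:ℤ)::l) * ind false true ((0:ℤ)::l) + patZ ((1:ℤ)::l) * ind false true ((1:ℤ)::l)) = (patZ l * ind false false l) + (ind false false l) + (patZ l * ind false true l) := by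
    intro l
    cases hc : carryT l <;> cases hd : topD l <;>
      simp only [ind, patZ_cons, topD_cons, carryT_cons, hc, hd] <;>
      norm_num <;> ring
  rw [lsum_congr h, lsum_add, lsum_add]
  try ring

lemma recBtf (m : ℕ) : lsum (m+1) (fun l => patZ l * ind true false l) =
    lsum m (fun l => patZ l * ind true false l) + lsum m (fun l => patZ l * ind true true l) := by
  rw [lsum_succ]
  have h : ∀ l, (patZ ((-1)::l) * ind true false ((-1)::l) + patZ ((0:ℤ)::l) * ind true false ((0:ℤ)::l) + patZ ((1:ℤ)::l) * ind true false ((1:ℤ)::l)) = (patZ l * ind true false l) + (patZ l * ind true true l) := by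
    intro l
    cases hc : carryT l <;> cases hd : topD l <;>
      simp only [ind, patZ_cons, topD_cons, carryT_cons, hc, hd] <;>
      norm_num <;> ring
  rw [lsum_congr h, lsum_add]
  try ring

lemma recBtt (m : ℕ) : lsum (m+1) (fun l => patZ l * ind true true l) =
    lsum m (fun l => patZ l * ind false false l) + lsum m (ind false false) + lsum m (fun l => patZ l * ind false true l) + lsum m (fun l => patZ l * ind true false l) + lsum m (ind true false) + lsum m (fun l => patZ l * ind true true l) := by
  rw [lsum_succ]
  have h : ∀ l, (patZ ((-1)::l) * ind true true ((-1)::l) + patZ ((0:ℤ)::l) * ind true true ((0:ℤ)::l) + patZ ((1:ℤ)::l) * ind true true ((1:ℤ)::l)) = (patZ l * ind false false l) + (ind false false l) + (patZ l * ind false true l) + (patZ l * ind true false l) + (ind true false l) + (patZ l * ind true true l) := by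
    intro l
    cases hc : carryT l <;> cases hd : topD l <;>
      simp only [ind, patZ_cons, topD_cons, carryT_cons, hc, hd] <;>
      norm_num <;> ring
  rw [lsum_congr h, lsum_add, lsum_add, lsum_add, lsum_add, lsum_add]
  try ring

lemma recCff (m : ℕ) : lsum (m+1) (fun l => patZ l ^ 2 * ind false false l) =
    lsum m (fun l => patZ l ^ 2 * ind false false l) + lsum m (fun l => patZ l ^ 2 * ind false true l) + lsum m (fun l => patZ l ^ 2 * ind true false l) + lsum m (fun l => patZ l ^ 2 * ind true true l) := by
  rw [lsum_succ]
  have h : ∀ l, (patZ ((-1)::l) ^ 2 * ind false false ((-1)::l) + patZ ((0:ℤ)::l) ^ 2 * ind false false ((0:ℤ)::l) + patZ ((1:ℤ)::l) ^ 2 * ind false false ((1:ℤ)::l)) = (patZ l ^ 2 * ind false false l) + (patZ l ^ 2 * ind false true l) + (patZ l ^ 2 * ind true false l) + (patZ l ^ 2 * ind true true l) := by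
    intro l
    cases hc : carryT l <;> cases hd : topD l <;>
      simp only [ind, patZ_cons, topD_cons, carryT_cons, hc, hd] <;>
      norm_num <;> ring
  rw [lsum_congr h, lsum_add, lsum_add, lsum_add]
  try ring

lemma recCft (m : ℕ) : lsum (m+1) (fun l => patZ l ^ 2 * ind false true l) =
    lsum m (fun l => patZ l ^ 2 * ind false false l) + lsum m (fun l => patZ l * ind false false l) + lsum m (fun l => patZ l * ind false false l) + lsum m (ind false false) + lsum m (fun l => patZ l ^ 2 * ind false true l) := by
  rw [lsum_succ]
  have h : ∀ l, (patZ ((-1)::l) ^ 2 * ind false true ((-1)::l) + patZ ((0:ℤ)::l) ^ 2 * ind false true ((0:ℤ)::l) + patZ ((1:ℤ)::l) ^ 2 * ind false true ((1:ℤ)::l)) = (patZ l ^ 2 * ind false false l) + (patZ l * ind false false l) + (patZ l * ind false false l) + (ind false false l) + (patZ l ^ 2 * ind false true l) := by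
    intro l
    cases hc : carryT l <;> cases hd : topD l <;>
      simp only [ind, patZ_cons, topD_cons, carryT_cons, hc, hd] <;>
      norm_num <;> ring
  rw [lsum_congr h, lsum_add, lsum_add, lsum_add, lsum_add]
  try ring

lemma recCtf (m : ℕ) : lsum (m+1) (fun l => patZ l ^ 2 * ind true false l) =
    lsum m (fun l => patZ l ^ 2 * ind true false l) + lsum m (fun l => patZ l ^ 2 * ind true true l) := by
  rw [lsum_succ]
  have h : ∀ l, (patZ ((-1)::l) ^ 2 * ind true false ((-1)::l) + patZ ((0:ℤ)::l) ^ 2 * ind true false ((0:ℤ)::l) + patZ ((1:ℤ)::l) ^ 2 * ind true false ((1:ℤ)::l)) = (patZ l ^ 2 * ind true false l) + (patZ l ^ 2 * ind true true l) := by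
    intro l
    cases hc : carryT l <;> cases hd : topD l <;>
      simp only [ind, patZ_cons, topD_cons, carryT_cons, hc, hd] <;>
      norm_num <;> ring
  rw [lsum_congr h, lsum_add]
  try ring

lemma recCtt (m : ℕ) : lsum (m+1) (fun l => patZ l ^ 2 * ind true true l) =
    lsum m (fun l => patZ l ^ 2 * ind false false l) + lsum m (fun l => patZ l * ind false false l) + lsum m (fun l => patZ l * ind false false l) + lsum m (ind false false) + lsum m (fun l => patZ l ^ 2 * ind false true l) + lsum m (fun l => patZ l ^ 2 * ind true false l) + lsum m (fun l => patZ l * ind true false l) + lsum m (fun l => patZ l * ind true false l) + lsum m (ind true false) + lsum m (fun l => patZ l ^ 2 * ind true true l) := by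
  rw [lsum_succ]
  have h : ∀ l, (patZ ((-1)::l) ^ 2 * ind true true ((-1)::l) + patZ ((0:ℤ)::l) ^ 2 * ind true true ((0:ℤ)::l) + patZ ((1:ℤ)::l) ^ 2 * ind true true ((1:ℤ)::l)) = (patZ l ^ 2 * ind false false l) + (patZ l * ind false false l) + (patZ l * ind false false l) + (ind false false l) + (patZ l ^ 2 * ind false true l) + (patZ l ^ 2 * ind true false l) + (patZ l * ind true false l) + (patZ l * ind true false l) + (ind true false l) + (patZ l ^ 2 * ind true true l) := by
    intro l
    cases hc : carryT l <;> cases hd : topD l <;>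
      simp only [ind, patZ_cons, topD_cons, carryT_cons, hc, hd] <;>
      norm_num <;> ring
  rw [lsum_congr h, lsum_add, lsum_add, lsum_add, lsum_add, lsum_add, lsum_add, lsum_add, lsum_add, lsum_add]
  try ring

lemma recAT (m : ℕ) : lsum (m+1) (fun _ => (1:ℤ)) = 3 * lsum m (fun _ => (1:ℤ)) := by
  rw [lsum_succ]
  have h : ∀ l, ((fun (_: List ℤ) => (1:ℤ)) ((-1)::l) + (fun (_: List ℤ) => (1:ℤ)) ((0:ℤ)::l) + (fun (_: List ℤ) => (1:ℤ)) ((1:ℤ)::l)) = ((1:ℤ) + 1 + 1) := by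
    intro l; norm_num
  rw [lsum_congr h, lsum_add, lsum_add]
  try ring

theorem stats (m : ℕ) (hm : 3 ≤ m) :
    lsum m (fun _ => (1:ℤ)) = 3^m ∧
    3 * lsum m (ind false false) = 3^m ∧
    6 * lsum m (ind false true) = 3^m + 3 ∧
    6 * lsum m (ind true false) = 3^m - 3 ∧
    3 * lsum m (ind true true) = 3^m ∧
    108 * lsum m (fun l => patZ l * ind false false l) = (10*(m:ℤ) - 23) * 3^m + 27 ∧
    108 * lsum m (fun l => patZ l * ind false true l) = (5*(m:ℤ) - 1) * 3^m + 27*(m:ℤ) - 27 ∧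
    108 * lsum m (fun l => patZ l * ind true false l) = (5*(m:ℤ) - 10) * 3^m - 27*(m:ℤ) + 54 ∧
    108 * lsum m (fun l => patZ l * ind true true l) = (10*(m:ℤ) - 5) * 3^m - 27 ∧
    1944 * lsum m (fun l => patZ l ^ 2 * ind false false l)
      = 50*(m:ℤ)^2*3^m - 194*(m:ℤ)*3^m + 285*3^m + 486*(m:ℤ) - 1701 ∧
    1944 * lsum m (fun l => patZ l ^ 2 * ind false true l)
      = 25*(m:ℤ)^2*3^m + 8*(m:ℤ)*3^m + 3*3^m + 243*(m:ℤ)^2 - 972*(m:ℤ) + 1701 ∧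
    1944 * lsum m (fun l => patZ l ^ 2 * ind true false l)
      = 25*(m:ℤ)^2*3^m - 82*(m:ℤ)*3^m + 102*3^m - 243*(m:ℤ)^2 + 1458*(m:ℤ) - 2430 ∧
    1944 * lsum m (fun l => patZ l ^ 2 * ind true true l)
      = 50*(m:ℤ)^2*3^m - 14*(m:ℤ)*3^m + 33*3^m - 486*(m:ℤ) + 1215 := by
  induction m with
  | zero => omega
  | succ k ih =>
    rcases Nat.lt_or_ge k 3 with hk | hk
    · have hk2 : k = 2 := by omega
      subst hk2
      refine ⟨?_,?_,?_,?_,?_,?_,?_,?_,?_,?_,?_,?_,?_⟩ <;> decide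
    · obtain ⟨h1,h2,h3,h4,h5,h6,h7,h8,h9,h10,h11,h12,h13⟩ := ih hk
      refine ⟨?_,?_,?_,?_,?_,?_,?_,?_,?_,?_,?_,?_,?_⟩
      · rw [recAT]; push_cast; linear_combination 3*h1
      · rw [recAff]; push_cast; linear_combination 3*h1
      · rw [recAft]; push_cast; linear_combination 2*h2 + h3
      · rw [recAtf]; push_cast; linear_combination h4 + 2*h5
      · rw [recAtt]; push_cast; linear_combination 3*h1
      · rw [recBff]; push_cast; linear_combination h6 + h7 + h8 + h9
      · rw [recBft]; push_cast; linear_combination h6 + 36*h2 + h7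
      · rw [recBtf]; push_cast; linear_combination h8 + h9
      · rw [recBtt]; push_cast; linear_combination h6 + 36*h2 + h7 + h8 + 18*h4 + h9
      · rw [recCff]; push_cast; linear_combination h10 + h11 + h12 + h13
      · rw [recCft]; push_cast; linear_combination h10 + 36*h6 + 648*h2 + h11
      · rw [recCtf]; push_cast; linear_combination h12 + h13
      · rw [recCtt]; push_cast
        linear_combination h10 + 36*h6 + 648*h2 + h11 + h12 + 36*h8 + 324*h4 + h13

lemma lsum_smul (m : ℕ) (c : ℤ) (f : List ℤ → ℤ) :
    lsum m (fun l => c * f l) = c * lsum m f := by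
  unfold lsum
  induction strs m with
  | nil => simp
  | cons a t ih => simp only [List.map_cons, List.sum_cons, ih, mul_add]

lemma ind_sum (l : List ℤ) :
    ind false false l + ind false true l + ind true false l + ind true true l = 1 := by
  cases hc : carryT l <;> cases hd : topD l <;> simp [ind, hc, hd]

lemma lsum_le (m : ℕ) (f g : List ℤ → ℤ) (h : ∀ l, f l ≤ g l) : lsum m f ≤ lsum m g := by
  unfold lsum
  induction strs m with
  | nil => simp
  | cons a t ih => simpa using add_le_add (h a) ih

theorem sumsq (m : ℕ) (hm : 3 ≤ m) :
    3 * lsum m (fun l => (36 * patZ l - (10*(m:ℤ) - 13))^2)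
      = 3*((72*(m:ℤ) + 113) * 3^m + 144*(m:ℤ) - 576) := by
  obtain ⟨h1,h2,h3,h4,h5,h6,h7,h8,h9,h10,h11,h12,h13⟩ := stats m hm
  have hpt : ∀ l, (36 * patZ l - (10*(m:ℤ) - 13))^2 =
      (1296 * (patZ l ^ 2 * ind false false l)) + (1296 * (patZ l ^ 2 * ind false true l))
      + (1296 * (patZ l ^ 2 * ind true false l)) + (1296 * (patZ l ^ 2 * ind true true l))
      + ((-(72*(10*(m:ℤ)-13))) * (patZ l * ind false false l))
      + ((-(72*(10*(m:ℤ)-13))) * (patZ l * ind false true l))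
      + ((-(72*(10*(m:ℤ)-13))) * (patZ l * ind true false l))
      + ((-(72*(10*(m:ℤ)-13))) * (patZ l * ind true true l))
      + ((10*(m:ℤ)-13)^2 * (1:ℤ)) := by
    intro l
    linear_combination (-(1296 * patZ l ^ 2 - 72*(10*(m:ℤ)-13) * patZ l)) * ind_sum l
  have hsmul : ∀ (c : ℤ) (f : List ℤ → ℤ), lsum m (fun l => c * f l) = c * lsum m f := by
    intro c f
    unfold lsum
    induction strs m with
    | nil => simp
    | cons a t ih => simp [ih]; ring
  rw [lsum_congr hpt, lsum_add, lsum_add, lsum_add, lsum_add, lsum_add, lsum_add, lsum_add,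
    lsum_add]
  rw [hsmul, hsmul, hsmul, hsmul, hsmul, hsmul, hsmul, hsmul, hsmul]
  linear_combination 2*h10 + 2*h11 + 2*h12 + 2*h13
    - 2*(10*(m:ℤ)-13)*h6 - 2*(10*(m:ℤ)-13)*h7 - 2*(10*(m:ℤ)-13)*h8 - 2*(10*(m:ℤ)-13)*h9
    + 3*(10*(m:ℤ)-13)^2*h1

lemma length_filter_eq_lsum (m : ℕ) (p : List ℤ → Prop) [DecidablePred p] :
    (((strs m).filter (fun l => decide (p l))).length : ℤ)
      = lsum m (fun l => if p l then (1:ℤ) else 0) := by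
  unfold lsum
  induction strs m with
  | nil => simp
  | cons a t ih =>
    by_cases hpa : p a <;> simp [List.filter_cons, hpa, ih] <;> push_cast <;> ring

theorem chebyshev (m : ℕ) (hm : 3 ≤ m) (lam : ℤ) :
    lam^2 * (((strs m).filter
        (fun l => decide (lam^2 ≤ (36 * patZ l - (10*(m:ℤ) - 13))^2))).length : ℤ)
      ≤ 300 * ((m:ℤ) + 1) * 3^m := by
  rw [length_filter_eq_lsum]
  have hle : lsum m (fun l => lam^2 * (if lam^2 ≤ (36 * patZ l - (10*(m:ℤ) - 13))^2 then (1:ℤ) else 0))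
      ≤ lsum m (fun l => (36 * patZ l - (10*(m:ℤ) - 13))^2) := by
    apply lsum_le
    intro l
    by_cases hb : lam^2 ≤ (36 * patZ l - (10*(m:ℤ) - 13))^2
    · simpa [hb] using hb
    · simp [hb]; positivity
  have hsmul := lsum_smul m (lam^2)
    (fun l => if lam^2 ≤ (36 * patZ l - (10*(m:ℤ) - 13))^2 then (1:ℤ) else 0)
  have hs := sumsq m hm
  have hpow : (1:ℤ) ≤ 3^m := one_le_pow₀ (by norm_num)
  have hmn : (3:ℤ) ≤ (m:ℤ) := by exact_mod_cast hm
  nlinarith [hle, hsmul, hs, hpow, hmn, mul_le_mul_of_nonneg_right hmn (le_trans zero_le_one hpow)]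


/-- digit of `S = 2^(s.length) + SvalZ s` at binary position `p`. -/
def digN (s : List ℤ) (p : ℕ) : ℕ :=
  if p < s.length then (if topD (s.drop (s.length - 1 - p)) then 1 else 0)
  else if p = s.length then (if carryT s then 0 else 1) else 0

def SvalZ : List ℤ → ℤ
  | [] => 0
  | x :: l => x * 2^(l.length) + SvalZ l

lemma digN_le_one (s : List ℤ) (p : ℕ) : digN s p ≤ 1 := by
  unfold digN
  split
  · split <;> omega
  · split
    · split <;> omega
    · omega

lemma digN_cons_lt (x : ℤ) (l : List ℤ) (p : ℕ) (hp : p < l.length) :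
    digN (x :: l) p = digN l p := by
  unfold digN
  have h1 : p < (x :: l).length := by simp; omega
  have h2 : (x :: l).length - 1 - p = (l.length - 1 - p) + 1 := by simp; omega
  rw [if_pos h1, if_pos hp, h2, List.drop_succ_cons]

lemma digN_cons_top (x : ℤ) (l : List ℤ) :
    digN (x :: l) l.length = if topD (x :: l) then 1 else 0 := by
  unfold digN
  have h1 : l.length < (x :: l).length := by simp
  have h2 : (x :: l).length - 1 - l.length = 0 := by simp
  rw [if_pos h1, h2, List.drop_zero]

lemma digN_top (s : List ℤ) : digN s s.length = if carryT s then 0 else 1 := by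
  unfold digN; simp

lemma digN_big (s : List ℤ) (p : ℕ) (hp : s.length < p) : digN s p = 0 := by
  unfold digN
  rw [if_neg (by omega), if_neg (by omega)]

lemma two_pow_sum (k : ℕ) : ∑ p ∈ Finset.range k, 2^p = 2^k - 1 := by
  induction k with
  | zero => simp
  | succ k ih =>
    rw [Finset.sum_range_succ, ih]
    have : 0 < 2^k := by positivity
    ring_nf
    omega

lemma extract (n k : ℕ) (hk : k < n) (D : ℕ → ℕ) (hD : ∀ p, D p ≤ 1) :
    (∑ p ∈ Finset.range n, 2^p * D p) / 2^k % 2 = D k := by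
  have hsplit : ∑ p ∈ Finset.range n, 2^p * D p
      = (∑ p ∈ Finset.range k, 2^p * D p)
        + (D k + 2 * ∑ p ∈ Finset.range (n - (k+1)), 2^p * D (k+1+p)) * 2^k := by
    rw [← Finset.sum_range_add_sum_Ico _ (Nat.succ_le_of_lt hk), Finset.sum_range_succ]
    rw [Finset.sum_Ico_eq_sum_range]
    have : ∀ p, 2^(k+1+p) * D (k+1+p) = (2^p * D (k+1+p) * 2) * 2^k := by
      intro p; ring
    rw [Finset.sum_congr rfl (fun p _ => this p), ← Finset.sum_mul, ← Finset.sum_mul]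
    ring
  have hA : (∑ p ∈ Finset.range k, 2^p * D p) < 2^k := by
    calc (∑ p ∈ Finset.range k, 2^p * D p) ≤ ∑ p ∈ Finset.range k, 2^p * 1 :=
          Finset.sum_le_sum (fun p _ => Nat.mul_le_mul_left _ (hD p))
    _ = 2^k - 1 := by simpa using two_pow_sum k
    _ < 2^k := by have : 0 < 2^k := (by positivity); omega
  rw [hsplit, Nat.add_mul_div_right _ _ (by positivity : 0 < 2^k),
    Nat.div_eq_of_lt hA, Nat.zero_add, Nat.add_mul_mod_self_left,
    Nat.mod_eq_of_lt (by have := hD k; omega)]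



lemma sval_digits (s : List ℤ) (hs : ∀ x ∈ s, x = -1 ∨ x = 0 ∨ x = 1) :
    SvalZ s + 2^(s.length) = ∑ p ∈ Finset.range (s.length + 1), 2^p * (digN s p : ℤ) := by
  induction s with
  | nil => simp [SvalZ, digN, carryT]
  | cons x l ih =>
    have hx := hs x (List.mem_cons_self)
    have hI := ih (fun y hy => hs y (List.mem_cons_of_mem x hy))
    simp only [List.length_cons, SvalZ]
    rw [Finset.sum_range_succ, Finset.sum_range_succ]
    have e1 : ∀ p ∈ Finset.range l.length, 2^p * (digN (x::l) p : ℤ) = 2^p * (digN l p : ℤ) :=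
      fun p hp => by rw [digN_cons_lt _ _ _ (Finset.mem_range.mp hp)]
    rw [Finset.sum_congr rfl e1]
    have e2 := digN_cons_top x l
    have e3 : digN (x :: l) (l.length + 1) = if carryT (x :: l) then 0 else 1 := by
      simpa using digN_top (x :: l)
    rw [e2, e3]
    rw [Finset.sum_range_succ, digN_top l] at hI
    rcases hx with hx | hx | hx <;> subst hx <;> cases hc : carryT l <;>
      simp only [topD_cons, carryT_cons, hc, if_true, if_false] at hI ⊢ <;>
      norm_num at hI ⊢ <;> push_cast at hI ⊢ <;> try linarith [hI, pow_succ (2:ℤ) l.length]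

lemma sval_eq_sum (s : List ℤ) :
    SvalZ s = ∑ k ∈ Finset.range s.length, 2^(s.length - 1 - k) * s.getD k 0 := by
  induction s with
  | nil => simp [SvalZ]
  | cons x l ih =>
    simp only [List.length_cons, SvalZ]
    rw [Finset.sum_range_succ']
    have e0 : 2^(l.length + 1 - 1 - 0) * (x :: l).getD 0 0 = x * 2^(l.length) := by
      simp [mul_comm]
    have e1 : ∀ k ∈ Finset.range l.length,
        2^(l.length + 1 - 1 - (k+1)) * (x :: l).getD (k+1) 0
          = 2^(l.length - 1 - k) * l.getD k 0 := by
      intro k hk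
      have : l.length + 1 - 1 - (k+1) = l.length - 1 - k := by omega
      rw [this, List.getD_cons_succ]
    rw [e0, Finset.sum_congr rfl e1, ih]
    ring

def sfx (n j : ℕ) (b : ℕ → ℤ) : List ℤ := (List.range (n - 1 - j)).map (fun k => b (j+1+k))

lemma sfx_length (n j : ℕ) (b : ℕ → ℤ) : (sfx n j b).length = n - 1 - j := by simp [sfx]

lemma sfx_getD (n j k : ℕ) (b : ℕ → ℤ) (hk : k < n - 1 - j) :
    (sfx n j b).getD k 0 = b (j+1+k) := by
  unfold sfx
  rw [List.getD_eq_getElem?_getD]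
  simp [List.getElem?_map, hk]

lemma cdgS_eq (n j : ℕ) (hj : j < n) (b : ℕ → ℤ) (hb1 : b j = 1) (hb0 : ∀ k < j, b k = 0) :
    cdgS n b = 2^(n - 1 - j) + SvalZ (sfx n j b) := by
  unfold cdgS
  rw [← Finset.sum_range_add_sum_Ico _ (Nat.succ_le_of_lt hj), Finset.sum_range_succ]
  have e0 : ∑ i ∈ Finset.range j, 2^(n - 1 - i) * b i = 0 :=
    Finset.sum_eq_zero (fun i hi => by rw [hb0 i (Finset.mem_range.mp hi), mul_zero])
  rw [e0, hb1, Finset.sum_Ico_eq_sum_range]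
  have hm : n - (j+1) = n - 1 - j := by omega
  rw [hm]
  have e1 : ∀ k ∈ Finset.range (n - 1 - j),
      2^(n - 1 - (j+1+k)) * b (j+1+k)
        = 2^((sfx n j b).length - 1 - k) * (sfx n j b).getD k 0 := by
    intro k hk
    have hk' := Finset.mem_range.mp hk
    rw [sfx_getD n j k b hk', sfx_length]
    have : n - 1 - (j+1+k) = n - 1 - j - 1 - k := by omega
    rw [this]
  rw [Finset.sum_congr rfl e1, sval_eq_sum (sfx n j b), sfx_length]
  ring


lemma S_digits (n j : ℕ) (hj : j < n) (b : ℕ → ℤ) (hb1 : b j = 1) (hb0 : ∀ k < j, b k = 0)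
    (hent : ∀ x ∈ sfx n j b, x = -1 ∨ x = 0 ∨ x = 1) :
    cdgS n b = ((∑ p ∈ Finset.range n, 2^p * digN (sfx n j b) p : ℕ) : ℤ) := by
  have hm : (sfx n j b).length = n - 1 - j := sfx_length n j b
  have hlen1 : (sfx n j b).length + 1 ≤ n := by omega
  rw [cdgS_eq n j hj b hb1 hb0]
  have h1 := sval_digits (sfx n j b) hent
  push_cast
  rw [← Finset.sum_range_add_sum_Ico _ hlen1]
  have hz : ∑ p ∈ Finset.Ico ((sfx n j b).length + 1) n, 2^p * (digN (sfx n j b) p : ℤ) = 0 :=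
    Finset.sum_eq_zero (fun p hp => by
      rw [digN_big _ p (by have := (Finset.mem_Ico.mp hp).1; omega)]; simp)
  rw [hz, ← h1, hm]
  ring

lemma btilde_eq (n j a : ℕ) (hj : j < n) (ha : a < n) (b : ℕ → ℤ) (hb1 : b j = 1)
    (hb0 : ∀ k < j, b k = 0) (hent : ∀ x ∈ sfx n j b, x = -1 ∨ x = 0 ∨ x = 1) :
    (cdgS n b).toNat / 2^(n-1-a) % 2 = digN (sfx n j b) (n-1-a) := by
  rw [S_digits n j hj b hb1 hb0 hent, Int.toNat_natCast]
  exact extract n (n-1-a) (by omega) _ (digN_le_one _)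

lemma digN_last (s : List ℤ) (k : ℕ) (hk : s.length = k + 1) :
    digN s k = if topD s then 1 else 0 := by
  unfold digN
  rw [if_pos (by omega), show s.length - 1 - k = 0 by omega, List.drop_zero]

lemma patZ_eq_card (s : List ℤ) :
    patZ s = (((Finset.range (s.length - 1)).filter
      (fun p => digN s p = 0 ∧ digN s (p+1) = 1)).card : ℤ) := by
  induction s with
  | nil => simp [patZ]
  | cons x l ih =>
    rcases Nat.eq_zero_or_pos l.length with hL | hL
    · have : l = [] := List.length_eq_zero_iff.mp hL
      subst this
      simp [patZ, topD]
    · obtain ⟨k, hk⟩ : ∃ k, l.length = k + 1 := ⟨l.length - 1, by omega⟩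
      have hrange : (x :: l).length - 1 = k + 1 := by simp [hk]
      rw [hrange, Finset.range_add_one, Finset.filter_insert]
      have hsame : (Finset.range k).filter (fun p => digN (x::l) p = 0 ∧ digN (x::l) (p+1) = 1)
          = (Finset.range k).filter (fun p => digN l p = 0 ∧ digN l (p+1) = 1) := by
        apply Finset.filter_congr
        intro p hp
        have hp' := Finset.mem_range.mp hp
        rw [digN_cons_lt x l p (by omega), digN_cons_lt x l (p+1) (by omega)]
      have hdk : digN (x::l) k = if topD l then 1 else 0 := by
        rw [digN_cons_lt x l k (by omega)]
        exact digN_last l k hk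
      have hdk1 : digN (x::l) (k+1) = if topD (x::l) then 1 else 0 := by
        rw [← hk]; exact digN_cons_top x l
      rw [patZ_cons, ih, ← hk]
      rw [show l.length - 1 = k by omega] at *
      by_cases hcond : topD l = false ∧ topD (x :: l) = true
      · rw [if_pos hcond, if_pos (by rw [hdk, digN_cons_top x l, hcond.1, hcond.2]; simp)]
        rw [Finset.card_insert_of_notMem (by simp), hsame]
        push_cast; ring
      · rw [if_neg hcond, if_neg (by
          rw [hdk, digN_cons_top x l]
          intro ⟨h1, h2⟩
          apply hcond
          constructor
          · revert h1; cases topD l <;> simp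
          · revert h2; cases topD (x::l) <;> simp), hsame]
        push_cast; ring

lemma count_eq_patZ (s : List ℤ) (n : ℕ) (hn : s.length + 1 ≤ n) :
    (patZ s ≤ (((Finset.range (n-1)).filter
        (fun p => digN s p = 0 ∧ digN s (p+1) = 1)).card : ℤ)) ∧
    ((((Finset.range (n-1)).filter
        (fun p => digN s p = 0 ∧ digN s (p+1) = 1)).card : ℤ) ≤ patZ s + 1) := by
  have hshrink : (Finset.range (n-1)).filter (fun p => digN s p = 0 ∧ digN s (p+1) = 1)
      = (Finset.range s.length).filter (fun p => digN s p = 0 ∧ digN s (p+1) = 1) := by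
    ext p
    simp only [Finset.mem_filter, Finset.mem_range]
    constructor
    · rintro ⟨hp, h0, h1⟩
      refine ⟨?_, h0, h1⟩
      by_contra hcon
      rw [digN_big s (p+1) (by omega)] at h1
      exact absurd h1 (by norm_num)
    · rintro ⟨hp, h0, h1⟩
      exact ⟨by omega, h0, h1⟩
  rw [hshrink]
  rcases Nat.eq_zero_or_pos s.length with hL | hL
  · have : s = [] := List.length_eq_zero_iff.mp hL
    subst this
    simp [patZ]
  · obtain ⟨k, hk⟩ : ∃ k, s.length = k + 1 := ⟨s.length - 1, by omega⟩
    rw [hk, Finset.range_add_one, Finset.filter_insert, patZ_eq_card s,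
      show s.length - 1 = k by omega]
    by_cases hcond : digN s k = 0 ∧ digN s (k+1) = 1
    · rw [if_pos hcond, Finset.card_insert_of_notMem (by simp)]
      push_cast; omega
    · rw [if_neg hcond]
      push_cast; omega

theorem count_bounds (n j : ℕ) (hj : j < n) (b : ℕ → ℤ) (hb1 : b j = 1)
    (hb0 : ∀ k < j, b k = 0) (hent : ∀ x ∈ sfx n j b, x = -1 ∨ x = 0 ∨ x = 1) :
    patZ (sfx n j b) ≤ ((((Finset.Ico 1 n).filter (fun a =>
        (cdgS n b).toNat / 2^(n-1-(a-1)) % 2 = 1 ∧ (cdgS n b).toNat / 2^(n-1-a) % 2 = 0)).card : ℤ)) ∧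
    ((((Finset.Ico 1 n).filter (fun a =>
        (cdgS n b).toNat / 2^(n-1-(a-1)) % 2 = 1 ∧ (cdgS n b).toNat / 2^(n-1-a) % 2 = 0)).card : ℤ))
      ≤ patZ (sfx n j b) + 1 := by
  have hm : (sfx n j b).length = n - 1 - j := sfx_length n j b
  have hcardeq : ((Finset.Ico 1 n).filter (fun a =>
        (cdgS n b).toNat / 2^(n-1-(a-1)) % 2 = 1 ∧ (cdgS n b).toNat / 2^(n-1-a) % 2 = 0)).card
      = ((Finset.range (n-1)).filter
        (fun p => digN (sfx n j b) p = 0 ∧ digN (sfx n j b) (p+1) = 1)).card := by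
    apply Finset.card_bij (fun a _ => n - 1 - a)
    · intro a ha
      simp only [Finset.mem_filter, Finset.mem_Ico] at ha
      obtain ⟨⟨ha1, ha2⟩, hc1, hc2⟩ := ha
      simp only [Finset.mem_filter, Finset.mem_range]
      refine ⟨by omega, ?_, ?_⟩
      · rw [← btilde_eq n j a hj (by omega) b hb1 hb0 hent]
        exact hc2
      · rw [show n - 1 - a + 1 = n - 1 - (a-1) by omega,
          ← btilde_eq n j (a-1) hj (by omega) b hb1 hb0 hent]
        exact hc1
    · intro a1 ha1 a2 ha2 h
      simp only [Finset.mem_filter, Finset.mem_Ico] at ha1 ha2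
      omega
    · intro p hp
      simp only [Finset.mem_filter, Finset.mem_range] at hp
      obtain ⟨hp1, hc1, hc2⟩ := hp
      refine ⟨n - 1 - p, ?_, by omega⟩
      simp only [Finset.mem_filter, Finset.mem_Ico]
      refine ⟨⟨by omega, by omega⟩, ?_, ?_⟩
      · rw [btilde_eq n j (n-1-p-1) hj (by omega) b hb1 hb0 hent,
          show n - 1 - (n-1-p-1) = p + 1 by omega]
        exact hc2
      · rw [btilde_eq n j (n-1-p) hj (by omega) b hb1 hb0 hent,
          show n - 1 - (n-1-p) = p by omega]
        exact hc1
  rw [hcardeq]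
  have := count_eq_patZ (sfx n j b) n (by omega)
  exact this










lemma mem_strs (m : ℕ) (l : List ℤ) :
    l ∈ strs m ↔ (l.length = m ∧ ∀ x ∈ l, x = -1 ∨ x = 0 ∨ x = 1) := by
  induction m generalizing l with
  | zero =>
    constructor
    · intro h
      have : l = [] := by simpa [strs] using h
      subst this; simp
    · rintro ⟨hlen, -⟩
      have : l = [] := List.length_eq_zero_iff.mp hlen
      subst this; simp [strs]
  | succ m ih =>
    simp only [strs, List.mem_flatMap]
    constructor
    · rintro ⟨l', hl', hmem⟩
      obtain ⟨hlen, hent⟩ := (ih l').mp hl'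
      have hstep : ∀ x : ℤ, (x = -1 ∨ x = 0 ∨ x = 1) →
          (x :: l').length = m + 1 ∧ ∀ y ∈ x :: l', y = -1 ∨ y = 0 ∨ y = 1 := by
        intro x hx
        refine ⟨by simp [hlen], ?_⟩
        intro y hy
        rcases List.mem_cons.mp hy with h | h
        · subst h; exact hx
        · exact hent y h
      have hcase : l = (-1:ℤ) :: l' ∨ l = (0:ℤ) :: l' ∨ l = (1:ℤ) :: l' := by
        simpa using hmem
      rcases hcase with h | h | h <;> subst h
      · exact hstep _ (by norm_num)
      · exact hstep _ (by norm_num)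
      · exact hstep _ (by norm_num)
    · rintro ⟨hlen, hent⟩
      match l with
      | x :: t =>
        refine ⟨t, ih t |>.mpr ⟨by simpa using hlen, fun y hy => hent y (List.mem_cons_of_mem x hy)⟩, ?_⟩
        have := hent x (List.mem_cons_self)
        simp only [List.mem_cons, List.mem_singleton]
        rcases this with h | h | h <;> rw [h] <;> tauto

def Lfull (j : ℕ) (s : List ℤ) : List ℤ := List.replicate j 0 ++ 1 :: s

lemma Lfull_getD_lt (j : ℕ) (s : List ℤ) (i : ℕ) (hi : i < j) :
    (Lfull j s).getD i 0 = 0 := by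
  unfold Lfull
  rw [List.getD_append _ _ _ _ (by simpa using hi)]
  rw [List.getD_eq_getElem?_getD]
  simp [List.getElem?_replicate, hi]

lemma Lfull_getD_eq (j : ℕ) (s : List ℤ) :
    (Lfull j s).getD j 0 = 1 := by
  unfold Lfull
  rw [List.getD_append_right _ _ _ _ (by simp)]
  simp

lemma Lfull_getD_gt (j : ℕ) (s : List ℤ) (k : ℕ) :
    (Lfull j s).getD (j+1+k) 0 = s.getD k 0 := by
  unfold Lfull
  rw [List.getD_append_right _ _ _ _ (by simp; omega)]
  have : j + 1 + k - (List.replicate j (0:ℤ)).length = k + 1 := by simp; omega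
  rw [this, List.getD_cons_succ]

section Meas
variable (μ : Measure (ℕ → ℤ)) (hμ : IsCDGProductMeasure μ)

lemma meas_of_firstn (n : ℕ) (E : Set (ℕ → ℤ))
    (hE : ∀ ω ω' : ℕ → ℤ, (∀ i < n, ω i = ω' i) → (ω ∈ E ↔ ω' ∈ E)) :
    MeasurableSet E := by
  classical
  let π : (ℕ → ℤ) → (Fin n → ℤ) := fun ω i => ω i.1
  let ext : (Fin n → ℤ) → (ℕ → ℤ) := fun v i => if h : i < n then v ⟨i, h⟩ else 0
  have hEeq : E = π ⁻¹' {v | ext v ∈ E} := by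
    ext ω
    simp only [Set.mem_preimage, Set.mem_setOf_eq]
    exact hE ω (ext (π ω)) (fun i hi => by simp [ext, π, hi])
  rw [hEeq]
  have hπ : Measurable π := measurable_pi_lambda _ (fun i => measurable_pi_apply i.1)
  apply hπ
  -- every subset of (Fin n → ℤ) is measurable
  have hsing : ∀ v : Fin n → ℤ, MeasurableSet ({v} : Set (Fin n → ℤ)) := by
    intro v
    have : ({v} : Set (Fin n → ℤ)) = ⋂ i : Fin n, (fun w : Fin n → ℤ => w i) ⁻¹' {v i} := by
      ext w; simp [funext_iff]
    rw [this]
    exact MeasurableSet.iInter (fun i => (measurable_pi_apply i) (measurableSet_singleton _))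
  have : {v | ext v ∈ E} = ⋃ (v : {v : Fin n → ℤ // ext v ∈ E}), {(v : Fin n → ℤ)} := by
    ext v; simp
  rw [this]
  exact MeasurableSet.iUnion (fun v => hsing v)

include hμ

lemma cyl_measure (n : ℕ) (c : ℕ → ℤ) (hc : ∀ i < n, c i = -1 ∨ c i = 0 ∨ c i = 1) :
    μ {ω : ℕ → ℤ | ∀ i < n, ω i = c i} = (1/3 : ENNReal)^n := by
  rw [hμ n c]
  rw [Finset.prod_congr rfl (fun i hi => if_pos (hc i (Finset.mem_range.mp hi)))]
  simp

lemma univ_measure : μ Set.univ = 1 := by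
  have := hμ 0 (fun _ => 0)
  simpa using this

lemma coord_null (i : ℕ) (z : ℤ) (hz : ¬(z = -1 ∨ z = 0 ∨ z = 1)) :
    μ {ω : ℕ → ℤ | ω i = z} = 0 := by
  classical
  have hsub : {ω : ℕ → ℤ | ω i = z} ⊆
      ⋃ (v : Fin i → ℤ), {ω : ℕ → ℤ | ∀ k < i + 1, ω k = (fun k => if h : k < i then v ⟨k, h⟩ else z) k} := by
    intro ω hω
    refine Set.mem_iUnion.mpr ⟨fun k => ω k.1, ?_⟩
    intro k hk
    by_cases h : k < i <;> simp [h]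
    have : k = i := by omega
    rw [this]; exact hω
  refine measure_mono_null hsub (measure_iUnion_null (fun v => ?_))
  rw [hμ (i+1) _]
  apply Finset.prod_eq_zero (Finset.mem_range.mpr (Nat.lt_succ_self i))
  rw [dif_neg (lt_irrefl i), if_neg hz]

lemma badset_null (n : ℕ) :
    μ {ω : ℕ → ℤ | ∃ i < n, ¬(ω i = -1 ∨ ω i = 0 ∨ ω i = 1)} = 0 := by
  classical
  have hsub : {ω : ℕ → ℤ | ∃ i < n, ¬(ω i = -1 ∨ ω i = 0 ∨ ω i = 1)} ⊆
      ⋃ (i : Fin n) (z : {z : ℤ // ¬(z = -1 ∨ z = 0 ∨ z = 1)}), {ω : ℕ → ℤ | ω i.1 = z.1} := by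
    rintro ω ⟨i, hi, hbad⟩
    exact Set.mem_iUnion.mpr ⟨⟨i, hi⟩, Set.mem_iUnion.mpr ⟨⟨ω i, hbad⟩, rfl⟩⟩
  refine measure_mono_null hsub (measure_iUnion_null (fun i => measure_iUnion_null (fun z => ?_)))
  exact coord_null μ hμ i.1 z.1 z.2

lemma measure_Q_le (n j : ℕ) (hj : j < n) (Q : Set (ℕ → ℤ))
    (P : List ℤ → Prop) [DecidablePred P]
    (hsub : ∀ ω ∈ Q, ω j = 1 ∧ ∀ k < j, ω k = 0)
    (himp : ∀ ω ∈ Q, (∀ i < n, ω i = -1 ∨ ω i = 0 ∨ ω i = 1) → P (sfx n j ω)) :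
    μ Q ≤ (((strs (n-1-j)).filter (fun l => decide (P l))).length : ENNReal) * (1/3)^n := by
  classical
  set m := n - 1 - j with hm
  set fs : Finset (List ℤ) := ((strs m).filter (fun l => decide (P l))).toFinset with hfs
  have hcover : Q ⊆ {ω : ℕ → ℤ | ∃ i < n, ¬(ω i = -1 ∨ ω i = 0 ∨ ω i = 1)} ∪
      ⋃ l ∈ fs, {ω : ℕ → ℤ | ∀ i < n, ω i = (Lfull j l).getD i 0} := by
    intro ω hω
    by_cases hgood : ∀ i < n, (ω i = -1 ∨ ω i = 0 ∨ ω i = 1)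
    · right
      have hmem : sfx n j ω ∈ fs := by
        rw [hfs, List.mem_toFinset, List.mem_filter]
        constructor
        · rw [mem_strs]
          refine ⟨sfx_length n j ω, ?_⟩
          intro x hx
          obtain ⟨k, hk, rfl⟩ := List.mem_map.mp hx
          have hk' := List.mem_range.mp hk
          exact hgood (j+1+k) (by omega)
        · exact decide_eq_true (himp ω hω hgood)
      refine Set.mem_biUnion hmem ?_
      intro i hi
      obtain ⟨h1, h0⟩ := hsub ω hω
      rcases Nat.lt_trichotomy i j with h | h | h
      · rw [Lfull_getD_lt j _ i h]
        exact h0 i h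
      · subst h
        rw [Lfull_getD_eq]
        exact h1
      · obtain ⟨k, rfl⟩ : ∃ k, i = j + 1 + k := ⟨i - j - 1, by omega⟩
        rw [Lfull_getD_gt, sfx_getD n j k ω (by omega)]
    · left
      push_neg at hgood
      obtain ⟨i, hi, hbad⟩ := hgood
      exact ⟨i, hi, by simp only [not_or]; exact hbad⟩
  calc μ Q ≤ μ ({ω : ℕ → ℤ | ∃ i < n, ¬(ω i = -1 ∨ ω i = 0 ∨ ω i = 1)}) +
      μ (⋃ l ∈ fs, {ω : ℕ → ℤ | ∀ i < n, ω i = (Lfull j l).getD i 0}) :=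
        le_trans (measure_mono hcover) (measure_union_le _ _)
    _ = μ (⋃ l ∈ fs, {ω : ℕ → ℤ | ∀ i < n, ω i = (Lfull j l).getD i 0}) := by
        rw [badset_null μ hμ n, zero_add]
    _ ≤ ∑ l ∈ fs, μ {ω : ℕ → ℤ | ∀ i < n, ω i = (Lfull j l).getD i 0} :=
        measure_biUnion_finset_le fs _
    _ ≤ ∑ _l ∈ fs, ((1:ENNReal)/3)^n := by
        apply Finset.sum_le_sum
        intro l hl
        rw [hfs, List.mem_toFinset, List.mem_filter] at hl
        obtain ⟨hlm, -⟩ := hl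
        obtain ⟨hlen, hent⟩ := (mem_strs m l).mp hlm
        apply le_of_eq
        apply cyl_measure μ hμ
        intro i _
        rcases Nat.lt_trichotomy i j with h | h | h
        · rw [Lfull_getD_lt j _ i h]; norm_num
        · subst h; rw [Lfull_getD_eq]; norm_num
        · obtain ⟨k, rfl⟩ : ∃ k, i = j + 1 + k := ⟨i - j - 1, by omega⟩
          rw [Lfull_getD_gt]
          by_cases hk : k < l.length
          · rw [List.getD_eq_getElem l 0 hk]
            exact hent _ (List.getElem_mem hk)
          · rw [List.getD_eq_default _ _ (by omega)]; norm_num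
    _ = (fs.card : ENNReal) * (1/3)^n := by rw [Finset.sum_const, nsmul_eq_mul]
    _ ≤ (((strs m).filter (fun l => decide (P l))).length : ENNReal) * (1/3)^n := by
        gcongr
        exact_mod_cast List.toFinset_card_le _
  
lemma measure_Fnj (n j : ℕ) :
    μ {ω : ℕ → ℤ | ω j = 1 ∧ ∀ k < j, ω k = 0} = (1/3 : ENNReal)^(j+1) := by
  classical
  have hset : {ω : ℕ → ℤ | ω j = 1 ∧ ∀ k < j, ω k = 0}
      = {ω : ℕ → ℤ | ∀ i < j + 1, ω i = (fun k => if k = j then (1:ℤ) else 0) i} := by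
    ext ω
    simp only [Set.mem_setOf_eq]
    constructor
    · rintro ⟨h1, h0⟩ i hi
      by_cases h : i = j
      · subst h; simp [h1]
      · rw [if_neg h]; exact h0 i (by omega)
    · intro h
      constructor
      · have := h j (by omega); simpa using this
      · intro k hk
        have := h k (by omega)
        rwa [if_neg (by omega)] at this
  rw [hset]
  apply cyl_measure μ hμ
  intro i _
  by_cases h : i = j <;> simp [h]

end Meas

lemma geom_tail (L n : ℕ) (h : L ≤ n) :
    ∑ j ∈ Finset.Ico L n, ((1:ENNReal)/3)^(j+1) + (1/3)^n ≤ (1/3)^L := by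
  induction n, h using Nat.le_induction with
  | base => simp
  | succ n hn ih =>
    rw [Finset.sum_Ico_succ_top hn]
    have h2 : ((1:ENNReal)/3)^(n+1) + (1/3)^(n+1) ≤ (1/3)^n := by
      rw [pow_succ]
      have h3 : (1:ENNReal)/3 + 1/3 ≤ 1 := by
        have e1 : (1:ENNReal)/3 + 1/3 ≤ 1/3 + 1/3 + 1/3 := le_add_of_nonneg_right (by positivity)
        have e2 : (1:ENNReal)/3 + 1/3 + 1/3 = 1 := by
          rw [ENNReal.div_add_div_same, ENNReal.div_add_div_same]
          have h111 : (1+1+1 : ENNReal) = 3 := by norm_num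
          rw [h111]
          exact ENNReal.div_self (by norm_num) (by norm_num)
        exact le_trans e1 (le_of_eq e2)
      calc (1/3:ENNReal)^n * (1/3) + (1/3)^n * (1/3) = (1/3)^n * (1/3 + 1/3) := by ring
        _ ≤ (1/3)^n * 1 := by exact mul_le_mul_right h3 _
        _ = (1/3)^n := mul_one _
    calc ∑ j ∈ Finset.Ico L n, ((1:ENNReal)/3)^(j+1) + (1/3)^(n+1) + (1/3)^(n+1)
        ≤ ∑ j ∈ Finset.Ico L n, ((1:ENNReal)/3)^(j+1) + (1/3)^n := by
          rw [add_assoc]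
          exact add_le_add_right h2 _
      _ ≤ (1/3)^L := ih

def Gset (ε : ℝ) (n : ℕ) : Set (ℕ → ℤ) :=
  {ω : ℕ → ℤ |
    (5 / 18 - ε) * n <
      (((Finset.Ico 1 n).filter (fun a =>
        btilde n ω (a - 1) = 1 ∧ btilde n ω a = 0)).card : ℝ) ∧
    (((Finset.Ico 1 n).filter (fun a =>
        btilde n ω (a - 1) = 1 ∧ btilde n ω a = 0)).card : ℝ) <
      (5 / 18 + ε) * n}

lemma pow3_cancel (m n : ℕ) (h : m ≤ n) : ((3:ENNReal))^m * (1/3)^n ≤ 1 := by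
  have h1 : ((3:ENNReal))^m * (1/3)^n ≤ (3:ENNReal)^n * (1/3)^n :=
    mul_le_mul_left (pow_le_pow_right₀ (by norm_num : (1:ENNReal) ≤ 3) h) _
  refine le_trans h1 (le_of_eq ?_)
  rw [one_div, ← mul_pow, ENNReal.mul_inv_cancel (by norm_num) (by norm_num), one_pow]

set_option maxHeartbeats 1000000 in
lemma bad_j_bound (μ : Measure (ℕ → ℤ)) (hμ : IsCDGProductMeasure μ) (ε : ℝ) (hε : 0 < ε)
    (n j L lam : ℕ) (hj : j < L) (hn4 : L + 4 ≤ n)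
    (hlamr : ((lam:ℝ)) ≤ 18*ε*n) (hlam1 : 1 ≤ lam)
    (hn2 : (10*(L:ℝ) + 23) ≤ 18*ε*n) :
    μ ({ω : ℕ → ℤ | ω j = 1 ∧ ∀ k < j, ω k = 0} ∩ (Gset ε n)ᶜ)
      ≤ ((300*(n+1) : ℕ) : ENNReal) / ((lam^2 : ℕ) : ENNReal) := by
  classical
  have hm3 : 3 ≤ n - 1 - j := by omega
  set m := n - 1 - j with hmdef
  have hmr : (m:ℝ) = (n:ℝ) - (j:ℝ) - 1 := by
    have : m + (j + 1) = n := by omega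
    have := congrArg (fun t : ℕ => (t:ℝ)) this
    push_cast at this
    linarith
  set P : List ℤ → Prop := fun l => ((lam:ℤ))^2 ≤ (36 * patZ l - (10*(m:ℤ) - 13))^2 with hP
  have himp : ∀ ω ∈ ({ω : ℕ → ℤ | ω j = 1 ∧ ∀ k < j, ω k = 0} ∩ (Gset ε n)ᶜ),
      (∀ i < n, ω i = -1 ∨ ω i = 0 ∨ ω i = 1) → P (sfx n j ω) := by
    intro ω hω hgood
    obtain ⟨⟨h1, h0⟩, hGc⟩ := hω
    have hent : ∀ x ∈ sfx n j ω, x = -1 ∨ x = 0 ∨ x = 1 := by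
      intro x hx
      obtain ⟨k, hk, rfl⟩ := List.mem_map.mp hx
      have hk' := List.mem_range.mp hk
      exact hgood (j+1+k) (by omega)
    have hcb := count_bounds n j (by omega) ω h1 h0 hent
    set C : ℕ := ((Finset.Ico 1 n).filter (fun a =>
        (cdgS n ω).toNat / 2^(n-1-(a-1)) % 2 = 1 ∧ (cdgS n ω).toNat / 2^(n-1-a) % 2 = 0)).card with hC
    have hGc' : ¬((5 / 18 - ε) * n < (C:ℝ) ∧ (C:ℝ) < (5 / 18 + ε) * n) := hGc
    have hPz := hcb.1
    have hPz' := hcb.2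
    set Pz : ℤ := patZ (sfx n j ω) with hPzdef
    have hPzr : (Pz:ℝ) ≤ (C:ℝ) := by exact_mod_cast hPz
    have hPzr' : (C:ℝ) ≤ (Pz:ℝ) + 1 := by exact_mod_cast hPz'
    have hlam0 : (0:ℝ) ≤ (lam:ℝ) := Nat.cast_nonneg _
    have hjL : (j:ℝ) + 1 ≤ (L:ℝ) := by exact_mod_cast hj
    have hmn : (m:ℝ) ≤ (n:ℝ) := by
      have : m ≤ n := by omega
      exact_mod_cast this
    have hdev : ((lam:ℝ))^2 ≤ (36 * (Pz:ℝ) - (10*(m:ℝ) - 13))^2 := by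
      rcases not_and_or.mp hGc' with hlo | hhi
      · push_neg at hlo
        have hkey : 36 * (Pz:ℝ) - (10*(m:ℝ) - 13) ≤ -(lam:ℝ) := by nlinarith
        nlinarith
      · push_neg at hhi
        have hkey : (lam:ℝ) ≤ 36 * (Pz:ℝ) - (10*(m:ℝ) - 13) := by nlinarith
        nlinarith
    show ((lam:ℤ))^2 ≤ (36 * Pz - (10*(m:ℤ) - 13))^2
    exact_mod_cast hdev
  have hsub : ∀ ω ∈ ({ω : ℕ → ℤ | ω j = 1 ∧ ∀ k < j, ω k = 0} ∩ (Gset ε n)ᶜ),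
      ω j = 1 ∧ ∀ k < j, ω k = 0 := fun ω hω => hω.1
  have key := measure_Q_le μ hμ n j (by omega) _ P hsub himp
  -- Chebyshev
  have hcheb := chebyshev m hm3 ((lam:ℤ))
  set cnt : ℕ := ((strs m).filter (fun l => decide (P l))).length with hcnt
  have hnat : lam^2 * cnt ≤ 300*(m+1)*3^m := by
    have : ((lam:ℤ))^2 * (cnt:ℤ) ≤ 300 * ((m:ℤ)+1) * 3^m := hcheb
    exact_mod_cast this
  have hlamne : ((lam^2 : ℕ) : ENNReal) ≠ 0 := by
    simp only [ne_eq, Nat.cast_eq_zero]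
    positivity
  have hlamtop : ((lam^2 : ℕ) : ENNReal) ≠ ⊤ := ENNReal.natCast_ne_top _
  have hc1 : (cnt : ENNReal) ≤ ((300*(m+1)*3^m : ℕ) : ENNReal) / ((lam^2 : ℕ) : ENNReal) := by
    rw [ENNReal.le_div_iff_mul_le (Or.inl hlamne) (Or.inl hlamtop)]
    calc (cnt : ENNReal) * ((lam^2 : ℕ) : ENNReal) = ((lam^2 * cnt : ℕ) : ENNReal) := by
          push_cast; ring
      _ ≤ ((300*(m+1)*3^m : ℕ) : ENNReal) := by exact_mod_cast hnat
  calc μ ({ω : ℕ → ℤ | ω j = 1 ∧ ∀ k < j, ω k = 0} ∩ (Gset ε n)ᶜ)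
      ≤ (cnt : ENNReal) * (1/3)^n := key
    _ ≤ (((300*(m+1)*3^m : ℕ) : ENNReal) / ((lam^2 : ℕ) : ENNReal)) * (1/3)^n := by
        gcongr
    _ = (((300*(m+1) : ℕ) : ENNReal) * ((lam^2 : ℕ) : ENNReal)⁻¹) * (((3:ENNReal))^m * (1/3)^n) := by
        rw [div_eq_mul_inv]
        push_cast
        ring
    _ ≤ (((300*(n+1) : ℕ) : ENNReal) * ((lam^2 : ℕ) : ENNReal)⁻¹) * 1 := by
        gcongr
        · omega
        · exact pow3_cancel m n (by omega)
    _ = ((300*(n+1) : ℕ) : ENNReal) / ((lam^2 : ℕ) : ENNReal) := by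
        rw [mul_one, div_eq_mul_inv]
set_option maxHeartbeats 1000000 in
lemma e_tendsto (μ : Measure (ℕ → ℤ)) (hμ : IsCDGProductMeasure μ) (ε : ℝ) (hε : 0 < ε) :
    Tendsto (fun n => μ (firstOne n ∩ (Gset ε n)ᶜ)) atTop (nhds 0) := by
  classical
  rw [ENNReal.tendsto_nhds_zero]
  intro η hη
  have hη2 : (0:ENNReal) < η / 2 := ENNReal.div_pos (ne_of_gt hη) (by norm_num)
  obtain ⟨L, hL⟩ : ∃ L : ℕ, ((1:ENNReal)/3)^L < η/2 := by
    have ht := ENNReal.tendsto_pow_atTop_nhds_zero_of_lt_one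
      (by norm_num : (1:ENNReal)/3 < 1)
    exact (ht.eventually_lt_const hη2).exists
  set v : ℕ := max 1 (Nat.ceil ((18*ε)⁻¹)) with hv
  have hv1 : 1 ≤ v := le_max_left _ _
  have hvr : (18*ε)⁻¹ ≤ (v:ℝ) := by
    refine le_trans (Nat.le_ceil _) ?_
    exact_mod_cast le_max_right 1 (Nat.ceil ((18*ε)⁻¹))
  set θ : ENNReal := min (η/2) 1 with hθ
  have hθ0 : θ ≠ 0 := by
    rw [hθ]
    exact ne_of_gt (lt_min hη2 one_pos)
  have hθtop : θ ≠ ⊤ := ne_top_of_le_ne_top ENNReal.one_ne_top (min_le_right _ _)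
  set rr : ℝ := θ.toReal with hrr
  have hrr0 : 0 < rr := ENNReal.toReal_pos hθ0 hθtop
  set W : ℕ := Nat.ceil (900*((L:ℝ)+1)*v/rr) with hW
  set N : ℕ := max (v*(W+1)) (max (L+4) (Nat.ceil ((10*(L:ℝ)+23)/(18*ε)) + 1)) with hN
  filter_upwards [Filter.eventually_ge_atTop N] with n hn
  have hnL4 : L + 4 ≤ n := le_trans (le_trans (le_max_left _ _) (le_max_right _ _)) hn
  have hnvW : v*(W+1) ≤ n := le_trans (le_max_left _ _) hn
  set lam : ℕ := n / v with hlam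
  have hlamW : W + 1 ≤ lam := (Nat.le_div_iff_mul_le (by omega)).mpr (by
    calc (W+1) * v = v * (W+1) := by ring
      _ ≤ n := hnvW)
  have hlam1 : 1 ≤ lam := by omega
  have hn2 : (10*(L:ℝ) + 23) ≤ 18*ε*n := by
    have hceil : ((10*(L:ℝ)+23)/(18*ε)) ≤ ((Nat.ceil ((10*(L:ℝ)+23)/(18*ε)) : ℕ) : ℝ) :=
      Nat.le_ceil _
    have hnc : Nat.ceil ((10*(L:ℝ)+23)/(18*ε)) + 1 ≤ n :=
      le_trans (le_trans (le_max_right _ _) (le_max_right _ _)) hn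
    have hncr : ((Nat.ceil ((10*(L:ℝ)+23)/(18*ε)) : ℕ) : ℝ) ≤ (n:ℝ) := by
      exact_mod_cast le_trans (Nat.le_succ _) hnc
    have h18 : (0:ℝ) < 18*ε := by linarith
    rw [div_le_iff₀ h18] at hceil
    calc (10*(L:ℝ) + 23) ≤ ((Nat.ceil ((10*(L:ℝ)+23)/(18*ε)) : ℕ) : ℝ) * (18*ε) := hceil
      _ ≤ (n:ℝ) * (18*ε) := by
          apply mul_le_mul_of_nonneg_right hncr (le_of_lt h18)
      _ = 18*ε*n := by ring
  have hlamr : ((lam:ℝ)) ≤ 18*ε*n := by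
    have h1 : ((lam:ℕ):ℝ) ≤ (n:ℝ)/(v:ℝ) := Nat.cast_div_le
    refine le_trans h1 ?_
    have hvpos : (0:ℝ) < v := by exact_mod_cast hv1
    rw [div_le_iff₀ hvpos]
    have h18 : (0:ℝ) < 18*ε := by linarith
    have h1v : (1:ℝ) ≤ 18*ε*v := by
      have h2v := mul_le_mul_of_nonneg_left hvr (le_of_lt h18)
      rwa [mul_inv_cancel₀ (ne_of_gt h18)] at h2v
    nlinarith [mul_le_mul_of_nonneg_left h1v (Nat.cast_nonneg (α := ℝ) n)]
  -- split the measure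
  have hsplit : μ (firstOne n ∩ (Gset ε n)ᶜ)
      ≤ ∑ j ∈ Finset.range n, μ ({ω : ℕ → ℤ | ω j = 1 ∧ ∀ k < j, ω k = 0} ∩ (Gset ε n)ᶜ) := by
    refine le_trans (measure_mono ?_) (measure_biUnion_finset_le _ _)
    rintro ω ⟨⟨j, hj, h1, h0⟩, hg⟩
    exact Set.mem_biUnion (Finset.mem_range.mpr hj) ⟨⟨h1, h0⟩, hg⟩
  rw [← Finset.sum_range_add_sum_Ico _ (show L ≤ n by omega)] at hsplit
  have htail : ∑ j ∈ Finset.Ico L n,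
      μ ({ω : ℕ → ℤ | ω j = 1 ∧ ∀ k < j, ω k = 0} ∩ (Gset ε n)ᶜ) ≤ ((1:ENNReal)/3)^L := by
    calc ∑ j ∈ Finset.Ico L n, μ ({ω : ℕ → ℤ | ω j = 1 ∧ ∀ k < j, ω k = 0} ∩ (Gset ε n)ᶜ)
        ≤ ∑ j ∈ Finset.Ico L n, ((1:ENNReal)/3)^(j+1) := by
          apply Finset.sum_le_sum
          intro j _
          exact le_of_le_of_eq (measure_mono Set.inter_subset_left) (measure_Fnj μ hμ n j)
      _ ≤ ((1:ENNReal)/3)^L := le_trans le_self_add (geom_tail L n (by omega))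
  have hhead : ∑ j ∈ Finset.range L,
      μ ({ω : ℕ → ℤ | ω j = 1 ∧ ∀ k < j, ω k = 0} ∩ (Gset ε n)ᶜ)
      ≤ (L : ENNReal) * (((300*(n+1):ℕ)):ENNReal) / (((lam^2:ℕ)):ENNReal) := by
    calc ∑ j ∈ Finset.range L, μ ({ω : ℕ → ℤ | ω j = 1 ∧ ∀ k < j, ω k = 0} ∩ (Gset ε n)ᶜ)
        ≤ ∑ _j ∈ Finset.range L, (((300*(n+1):ℕ)):ENNReal) / (((lam^2:ℕ)):ENNReal) := by
          apply Finset.sum_le_sum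
          intro j hj
          exact bad_j_bound μ hμ ε hε n j L lam (Finset.mem_range.mp hj) hnL4 hlamr hlam1 hn2
      _ = (L : ENNReal) * ((((300*(n+1):ℕ)):ENNReal) / (((lam^2:ℕ)):ENNReal)) := by
          rw [Finset.sum_const, Finset.card_range, nsmul_eq_mul]
      _ = (L : ENNReal) * (((300*(n+1):ℕ)):ENNReal) / (((lam^2:ℕ)):ENNReal) := by
          rw [mul_div_assoc]
  -- the head bound is ≤ θ
  have hlamne : (((lam^2:ℕ)):ENNReal) ≠ 0 := by
    simp only [ne_eq, Nat.cast_eq_zero]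
    positivity
  have hlamtop : (((lam^2:ℕ)):ENNReal) ≠ ⊤ := ENNReal.natCast_ne_top _
  have hreal : (L:ℝ) * (300*((n:ℝ)+1)) ≤ rr * ((lam:ℝ))^2 := by
    have hWr : 900*((L:ℝ)+1)*v/rr ≤ ((W:ℕ):ℝ) := Nat.le_ceil _
    have hlamWr : ((W:ℕ):ℝ) + 1 ≤ ((lam:ℕ):ℝ) := by exact_mod_cast hlamW
    have hmul : 900*((L:ℝ)+1)*v ≤ rr * lam := by
      rw [div_le_iff₀ hrr0] at hWr
      calc 900*((L:ℝ)+1)*v ≤ ((W:ℕ):ℝ) * rr := hWr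
        _ ≤ (lam:ℝ) * rr := by
            apply mul_le_mul_of_nonneg_right (by linarith) (le_of_lt hrr0)
        _ = rr * lam := by ring
    have hnat3 : n + 1 ≤ 3*(v*lam) := by
      have hmod := Nat.div_add_mod n v
      rw [← hlam] at hmod
      have hmd : n % v < v := Nat.mod_lt _ (by omega)
      have h2 : v ≤ v * lam := by
        calc v = v * 1 := by ring
          _ ≤ v * lam := Nat.mul_le_mul_left v hlam1
      omega
    have hn3vr : (n:ℝ)+1 ≤ 3*((v:ℝ)*(lam:ℝ)) := by exact_mod_cast hnat3
    have hv1r : (1:ℝ) ≤ v := by exact_mod_cast hv1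
    have hlam1r : (1:ℝ) ≤ lam := by exact_mod_cast hlam1
    have hL0 : (0:ℝ) ≤ L := Nat.cast_nonneg _
    nlinarith [mul_le_mul_of_nonneg_right hmul (by linarith : (0:ℝ) ≤ (lam:ℝ)),
      mul_le_mul_of_nonneg_left hn3vr (by positivity : (0:ℝ) ≤ 300*(L:ℝ))]
  have hfinal : (L : ENNReal) * (((300*(n+1):ℕ)):ENNReal) / (((lam^2:ℕ)):ENNReal) ≤ θ := by
    rw [ENNReal.div_le_iff_le_mul (Or.inl hlamne) (Or.inr hθ0)]
    rw [← ENNReal.ofReal_toReal hθtop, ← hrr]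
    calc (L : ENNReal) * (((300*(n+1):ℕ)):ENNReal)
        = ENNReal.ofReal ((L:ℝ) * (300*((n:ℝ)+1))) := by
          rw [ENNReal.ofReal_mul (Nat.cast_nonneg _)]
          rw [ENNReal.ofReal_natCast]
          congr 1
          rw [show ((300:ℝ)*((n:ℝ)+1)) = (((300*(n+1):ℕ)):ℝ) by push_cast; ring,
            ENNReal.ofReal_natCast]
      _ ≤ ENNReal.ofReal (rr * ((lam:ℝ))^2) := ENNReal.ofReal_le_ofReal hreal
      _ = ENNReal.ofReal rr * ENNReal.ofReal (((lam:ℝ))^2) :=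
          ENNReal.ofReal_mul (le_of_lt hrr0)
      _ = ENNReal.ofReal rr * (((lam^2:ℕ)):ENNReal) := by
          congr 1
          rw [show (((lam:ℕ):ℝ))^2 = (((lam^2:ℕ)):ℝ) by push_cast; ring,
            ENNReal.ofReal_natCast]
  calc μ (firstOne n ∩ (Gset ε n)ᶜ)
      ≤ (∑ j ∈ Finset.range L, μ ({ω : ℕ → ℤ | ω j = 1 ∧ ∀ k < j, ω k = 0} ∩ (Gset ε n)ᶜ))
        + ∑ j ∈ Finset.Ico L n, μ ({ω : ℕ → ℤ | ω j = 1 ∧ ∀ k < j, ω k = 0} ∩ (Gset ε n)ᶜ) :=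
        hsplit
    _ ≤ θ + η/2 := by
        apply add_le_add
        · exact le_trans hhead hfinal
        · exact le_trans htail (le_of_lt hL)
    _ ≤ η/2 + η/2 := by
        apply add_le_add_left
        exact min_le_left _ _
    _ = η := ENNReal.add_halves η
lemma firstOne_meas (n : ℕ) : MeasurableSet (firstOne n) := by
  apply meas_of_firstn n
  intro ω ω' hag
  simp only [firstOne, Set.mem_setOf_eq]
  constructor
  · rintro ⟨j, hj, h1, h0⟩
    exact ⟨j, hj, by rw [← hag j hj]; exact h1,
      fun k hk => by rw [← hag k (by omega)]; exact h0 k hk⟩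
  · rintro ⟨j, hj, h1, h0⟩
    exact ⟨j, hj, by rw [hag j hj]; exact h1,
      fun k hk => by rw [hag k (by omega)]; exact h0 k hk⟩

end CDG9

/-- with `N(ω)` the number of `a ∈ {1,…,n−1}` with `b̃_{a-1} = 1` and `b̃_a = 0`, for every `ε > 0` the conditional probability `μ((5/18 − ε)n < N < (5/18 + ε)n ∣ F_n) → 1` as `n → ∞`. -/
theorem stmt_9 (μ : Measure (ℕ → ℤ)) (hμ : IsCDGProductMeasure μ) (ε : ℝ) (hε : 0 < ε) :
    Tendsto (fun n : ℕ =>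
      μ[|firstOne n] {ω : ℕ → ℤ |
        (5 / 18 - ε) * n <
          (((Finset.Ico 1 n).filter (fun a =>
            btilde n ω (a - 1) = 1 ∧ btilde n ω a = 0)).card : ℝ) ∧
        (((Finset.Ico 1 n).filter (fun a =>
            btilde n ω (a - 1) = 1 ∧ btilde n ω a = 0)).card : ℝ) <
          (5 / 18 + ε) * n})
      atTop (nhds 1) := by
  classical
  show Tendsto (fun n : ℕ => μ[|firstOne n] (CDG9.Gset ε n)) atTop (nhds 1)
  have he := CDG9.e_tendsto μ hμ ε hε
  have h3e : Tendsto (fun n => 3 * μ (firstOne n ∩ (CDG9.Gset ε n)ᶜ)) atTop (nhds 0) := by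
    have := ENNReal.Tendsto.const_mul (a := (3:ENNReal)) he (Or.inr (by norm_num))
    simpa using this
  have hlow : Tendsto (fun n => 1 - 3 * μ (firstOne n ∩ (CDG9.Gset ε n)ᶜ)) atTop (nhds 1) := by
    have := ENNReal.Tendsto.sub (tendsto_const_nhds (x := (1:ENNReal))) h3e
      (Or.inl (by norm_num))
    simpa using this
  have hbounds : ∀ n : ℕ, 1 ≤ n →
      (1 - 3 * μ (firstOne n ∩ (CDG9.Gset ε n)ᶜ) ≤ μ[|firstOne n] (CDG9.Gset ε n)
        ∧ μ[|firstOne n] (CDG9.Gset ε n) ≤ 1) := by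
    intro n hn
    set F := firstOne n with hF
    set G := CDG9.Gset ε n with hG
    have hf1 : (1/3:ENNReal) ≤ μ F := by
      have heq := CDG9.measure_Fnj μ hμ n 0
      have hsub : {ω : ℕ → ℤ | ω 0 = 1 ∧ ∀ k < 0, ω k = 0} ⊆ F := by
        rintro ω ⟨h1, _⟩
        exact ⟨0, by omega, h1, fun k hk => absurd hk (by omega)⟩
      calc (1/3:ENNReal) = (1/3)^(0+1) := by rw [pow_one]
        _ = μ {ω : ℕ → ℤ | ω 0 = 1 ∧ ∀ k < 0, ω k = 0} := heq.symm
        _ ≤ μ F := measure_mono hsub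
    have hf2 : μ F ≤ 1 := le_trans (measure_mono (Set.subset_univ _))
      (le_of_eq (CDG9.univ_measure μ hμ))
    have hfne0 : μ F ≠ 0 := by
      intro h
      rw [h] at hf1
      exact absurd hf1 (by norm_num)
    have hfnetop : μ F ≠ ⊤ := ne_top_of_le_ne_top ENNReal.one_ne_top hf2
    have hinv3 : (μ F)⁻¹ ≤ 3 := by
      calc (μ F)⁻¹ ≤ ((1:ENNReal)/3)⁻¹ := ENNReal.inv_le_inv' hf1
        _ = 3 := by rw [one_div, inv_inv]
    have hcond := ProbabilityTheory.cond_apply (μ := μ) (CDG9.firstOne_meas n) G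
    constructor
    · rw [tsub_le_iff_right]
      have hFle : μ F ≤ μ (F ∩ G) + μ (F ∩ Gᶜ) := by
        calc μ F = μ ((F ∩ G) ∪ (F ∩ Gᶜ)) := by rw [Set.inter_union_compl]
          _ ≤ μ (F ∩ G) + μ (F ∩ Gᶜ) := measure_union_le _ _
      calc (1:ENNReal) = (μ F)⁻¹ * μ F := (ENNReal.inv_mul_cancel hfne0 hfnetop).symm
        _ ≤ (μ F)⁻¹ * (μ (F ∩ G) + μ (F ∩ Gᶜ)) := mul_le_mul_right hFle _
        _ = (μ F)⁻¹ * μ (F ∩ G) + (μ F)⁻¹ * μ (F ∩ Gᶜ) := mul_add _ _ _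
        _ ≤ μ[|F] G + 3 * μ (F ∩ Gᶜ) := by
            apply add_le_add
            · rw [hcond]
            · exact mul_le_mul_left hinv3 _
    · rw [hcond]
      calc (μ F)⁻¹ * μ (F ∩ G) ≤ (μ F)⁻¹ * μ F :=
            mul_le_mul_right (measure_mono Set.inter_subset_left) _
        _ = 1 := ENNReal.inv_mul_cancel hfne0 hfnetop
  apply tendsto_of_tendsto_of_tendsto_of_le_of_le' hlow tendsto_const_nhds
  · filter_upwards [Filter.eventually_ge_atTop 1] with n hn
    exact (hbounds n hn).1
  · filter_upwards [Filter.eventually_ge_atTop 1] with n hn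
    exact (hbounds n hn).2
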